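/- Every multisymmetric function e_{(α_1,...,α_k)}(a_1,...,a_k) belongs to the subring of A_R(n,m)^{S_n} generated by the elements e_i(μ) for 1 ≤ i ≤ n, where μ ranges over the monomials in a_1,...,a_k. -/

import Mathlib

open MvPolynomial Finset
open scoped Classical

noncomputable section

variable {R : Type*} [CommRing R]

/-- f(j): substitution y_i ↦ x_i(j). -/
def subst (m n : ℕ) (f : MvPolynomial (Fin m) R) (j : Fin n) :
    MvPolynomial (Fin m × Fin n) R :=
  rename (fun i => (i, j)) f

/-- the action of σ ∈ Sₙ on A_R(n,m). -/
def permRename (m n : ℕ) (σ : Equiv.Perm (Fin n)) :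
    MvPolynomial (Fin m × Fin n) R →ₐ[R] MvPolynomial (Fin m × Fin n) R :=
  rename (fun q => (q.1, σ q.2))

/-- invariant submodule A_R(n,m)^{Sₙ}. -/
def invSub (R : Type*) [CommRing R] (m n : ℕ) :
    Submodule R (MvPolynomial (Fin m × Fin n) R) where
  carrier := {p | ∀ σ : Equiv.Perm (Fin n), permRename m n σ p = p}
  add_mem' := fun ha hb σ => by simp [map_add, ha σ, hb σ]
  zero_mem' := fun σ => by simp
  smul_mem' := fun c p hp σ => by simp [map_smul, hp σ]

/-- invariant subalgebra A_R(n,m)^{Sₙ}. -/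
def invAlg (R : Type*) [CommRing R] (m n : ℕ) :
    Subalgebra R (MvPolynomial (Fin m × Fin n) R) where
  carrier := {p | ∀ σ : Equiv.Perm (Fin n), permRename m n σ p = p}
  add_mem' := fun ha hb σ => by simp [map_add, ha σ, hb σ]
  mul_mem' := fun ha hb σ => by simp [map_mul, ha σ, hb σ]
  algebraMap_mem' := fun r σ => by simp [permRename]

/-- e_α(f): coefficient of t^α in ∏ᵢ (1 + ∑ₕ tₕ fₕ(i)). -/
def eAlpha (m n : ℕ) {ι : Type*} [Fintype ι] (f : ι → MvPolynomial (Fin m) R) (α : ι → ℕ) :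
    MvPolynomial (Fin m × Fin n) R :=
  coeff (Finsupp.equivFunOnFinite.symm α)
    (∏ i : Fin n, (1 + ∑ h : ι, X h * C (subst m n (f h) i)))

/-- k-th elementary symmetric polynomial evaluated at v(1),…,v(n). -/
def esymVal {S : Type*} [CommRing S] (n : ℕ) (v : Fin n → S) (k : ℕ) : S :=
  ∑ A ∈ Finset.powersetCard k (Finset.univ : Finset (Fin n)), ∏ j ∈ A, v j

/-- multidegree of a monomial exponent. -/
def wdeg (m n : ℕ) (d : Fin m × Fin n →₀ ℕ) : Fin m → ℕ := fun i => ∑ j : Fin n, d (i, j)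

/-- multidegree-a component of A_R(n,m). -/
def comp (R : Type*) [CommRing R] (m n : ℕ) (a : Fin m → ℕ) :
    Submodule R (MvPolynomial (Fin m × Fin n) R) where
  carrier := {p | ∀ d ∈ p.support, wdeg m n d = a}
  add_mem' := fun ha hb d hd => by
    rcases Finset.mem_union.1 (MvPolynomial.support_add hd) with h | h
    · exact ha d h
    · exact hb d h
  zero_mem' := fun d hd => by simp at hd
  smul_mem' := fun c p hp d hd => hp d (MvPolynomial.support_smul hd)

/-- the restriction map πₙ₊₁ : A_R(n+1,m) → A_R(n,m), x_i(n+1) ↦ 0. -/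
def projDown (R : Type*) [CommRing R] (m n : ℕ) :
    MvPolynomial (Fin m × Fin (n+1)) R →ₐ[R] MvPolynomial (Fin m × Fin n) R :=
  aeval (fun p : Fin m × Fin (n+1) =>
    if h : (p.2 : ℕ) < n then X (p.1, ⟨p.2, h⟩) else 0)

/-- e_α for finitely supported α : M_m⁺ → ℕ. -/
def eAlphaM (R : Type*) [CommRing R] (m n : ℕ) (α : {d : Fin m →₀ ℕ // d ≠ 0} →₀ ℕ) :
    MvPolynomial (Fin m × Fin n) R :=
  eAlpha m n (fun l => monomial ((α.support.equivFin.symm l) : {d : Fin m →₀ ℕ // d ≠ 0}).1 (1 : R))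
    (fun l => α (α.support.equivFin.symm l))

/-- a monomial of positive degree is primitive if it is not a proper power. -/
def Primitive (m : ℕ) (d : Fin m →₀ ℕ) : Prop :=
  d ≠ 0 ∧ ∀ (e : Fin m →₀ ℕ) (k : ℕ), 2 ≤ k → d ≠ k • e


namespace Stmt11Aux
variable {R : Type*} [CommRing R] {k n : ℕ}

lemma prod_monomial {σ ι A : Type*} [CommSemiring A] (s : Finset ι)
    (e : ι → σ →₀ ℕ) (c : ι → A) :
    ∏ i ∈ s, monomial (e i) (c i) = monomial (∑ i ∈ s, e i) (∏ i ∈ s, c i) := by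
  classical
  induction s using Finset.induction with
  | empty => simp
  | insert _ _ h ih =>
      rw [prod_insert h, prod_insert h, sum_insert h, ih, monomial_mul]

/-- exponent finsupp of a degree-assignment `w`. -/
def expOf (w : Fin n → (Fin k →₀ ℕ)) : Fin k × Fin n →₀ ℕ :=
  Finsupp.equivFunOnFinite.symm fun p => w p.2 p.1

lemma expOf_apply (w : Fin n → (Fin k →₀ ℕ)) (p : Fin k × Fin n) :
    expOf w p = w p.2 p.1 := Finsupp.equivFunOnFinite_symm_apply_apply _ _

/-- the monomial x^w. -/
def xpow (R : Type*) [CommRing R] (w : Fin n → (Fin k →₀ ℕ)) :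
    MvPolynomial (Fin k × Fin n) R := monomial (expOf w) 1

/-- x^d(j). -/
def xd (R : Type*) [CommRing R] (d : Fin k →₀ ℕ) (j : Fin n) :
    MvPolynomial (Fin k × Fin n) R := xpow R fun j' => if j' = j then d else 0

lemma prod_xd (w : Fin n → (Fin k →₀ ℕ)) :
    ∏ j : Fin n, xd R (w j) j = xpow R w := by
  unfold xd xpow
  rw [prod_monomial, prod_const_one]
  have he : (∑ j : Fin n, expOf fun j' => if j' = j then w j else 0) = expOf w := by
    ext p
    rw [Finsupp.finset_sum_apply]
    simp only [expOf_apply]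
    have : ∀ j : Fin n, ((if p.2 = j then w j else 0 : Fin k →₀ ℕ)) p.1
        = if p.2 = j then w j p.1 else 0 := by
      intro j; split <;> simp
    rw [Finset.sum_congr rfl (fun j _ => this j), Finset.sum_ite_eq]
    simp
  rw [he]

lemma subst_prod_pow (d : Fin k →₀ ℕ) (j : Fin n) :
    subst k n (∏ l : Fin k, (X l : MvPolynomial (Fin k) R) ^ (d l)) j = xd R d j := by
  unfold subst
  rw [map_prod]
  simp only [map_pow, rename_X]
  simp only [X_pow_eq_monomial]
  rw [prod_monomial, prod_const_one]
  unfold xd xpow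
  have he : (∑ l : Fin k, Finsupp.single ((l, j) : Fin k × Fin n) (d l))
      = expOf fun j' => if j' = j then d else 0 := by
    ext p
    rw [Finsupp.finset_sum_apply, expOf_apply]
    simp only [Finsupp.single_apply]
    rcases p with ⟨h, j'⟩
    by_cases hj : j' = j
    · subst hj
      have : ∀ l : Fin k, (if (l, j') = (h, j') then d l else 0) = if l = h then d l else 0 := by
        intro l; simp [Prod.ext_iff]
      rw [Finset.sum_congr rfl (fun l _ => this l), Finset.sum_ite_eq']
      simp
    · rw [if_neg hj, Finset.sum_eq_zero]
      · simp
      · intro l _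
        rw [if_neg]
        simp [Prod.ext_iff]
        tauto
  rw [he]


/-- fiber statistics of a degree assignment. -/
def stat (w : Fin n → (Fin k →₀ ℕ)) : (Fin k →₀ ℕ) →₀ ℕ :=
  ∑ j : Fin n, if w j = 0 then 0 else Finsupp.single (w j) 1

lemma stat_apply_zero (w : Fin n → (Fin k →₀ ℕ)) : stat w 0 = 0 := by
  unfold stat
  rw [Finsupp.finset_sum_apply]
  refine Finset.sum_eq_zero fun j _ => ?_
  split
  · simp
  · rw [Finsupp.single_apply, if_neg (by assumption)]

lemma stat_apply (w : Fin n → (Fin k →₀ ℕ)) {d : Fin k →₀ ℕ} (hd : d ≠ 0) :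
    stat w d = (univ.filter fun j => w j = d).card := by
  unfold stat
  rw [Finsupp.finset_sum_apply]
  rw [Finset.card_filter]
  refine Finset.sum_congr rfl fun j _ => ?_
  by_cases h : w j = d
  · rw [if_pos h, if_neg (h ▸ hd), h, Finsupp.single_apply, if_pos rfl]
  · rw [if_neg h]
    split
    · simp
    · rw [Finsupp.single_apply, if_neg h]

/-- total number of (counted) parts. -/
def tot (lam : (Fin k →₀ ℕ) →₀ ℕ) : ℕ := lam.sum fun _ v => v

lemma tot_eq (lam : (Fin k →₀ ℕ) →₀ ℕ) : tot lam = ∑ d ∈ lam.support, lam d := rfl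

lemma tot_stat (w : Fin n → (Fin k →₀ ℕ)) :
    tot (stat w) = (univ.filter fun j => w j ≠ 0).card := by
  unfold tot stat
  rw [← Finsupp.sum_finset_sum_index (by simp) (by intros; rfl)]
  rw [Finset.card_filter]
  refine Finset.sum_congr rfl fun j _ => ?_
  split
  · simp_all
  · rw [Finsupp.sum_single_index rfl]

/-- the Finset of degree assignments with fiber statistics `lam`. -/
def WS (k n : ℕ) (lam : (Fin k →₀ ℕ) →₀ ℕ) : Finset (Fin n → (Fin k →₀ ℕ)) :=
  (Fintype.piFinset fun _ => insert 0 lam.support).filter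
    fun w => ∀ d ∈ lam.support, (univ.filter fun j => w j = d).card = lam d

lemma mem_WS {lam : (Fin k →₀ ℕ) →₀ ℕ} {w : Fin n → (Fin k →₀ ℕ)} :
    w ∈ WS k n lam ↔ (∀ j, w j = 0 ∨ w j ∈ lam.support) ∧
      ∀ d ∈ lam.support, (univ.filter fun j => w j = d).card = lam d := by
  unfold WS
  rw [Finset.mem_filter, Fintype.mem_piFinset]
  simp [Finset.mem_insert]

lemma stat_eq_of_mem_WS {lam : (Fin k →₀ ℕ) →₀ ℕ} (h0 : lam 0 = 0)
    {w : Fin n → (Fin k →₀ ℕ)} (hw : w ∈ WS k n lam) : stat w = lam := by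
  rw [mem_WS] at hw
  ext d
  by_cases hd : d = 0
  · rw [hd, stat_apply_zero, h0]
  · rw [stat_apply w hd]
    by_cases hds : d ∈ lam.support
    · exact hw.2 d hds
    · rw [Finsupp.notMem_support_iff.1 hds]
      rw [Finset.card_eq_zero, Finset.filter_eq_empty_iff]
      intro j _
      intro hj
      rcases hw.1 j with h | h
      · exact hd (hj ▸ h)
      · exact hds (hj ▸ h)

lemma mem_WS_of_stat_eq {lam : (Fin k →₀ ℕ) →₀ ℕ} (h0 : lam 0 = 0)
    {w : Fin n → (Fin k →₀ ℕ)} (hw : stat w = lam) : w ∈ WS k n lam := by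
  rw [mem_WS]
  constructor
  · intro j
    by_cases h : w j = 0
    · exact Or.inl h
    · right
      rw [Finsupp.mem_support_iff, ← hw, stat_apply w h]
      rw [← Nat.pos_iff_ne_zero, Finset.card_pos]
      exact ⟨j, Finset.mem_filter.2 ⟨Finset.mem_univ j, rfl⟩⟩
  · intro d hd
    have hdne : d ≠ 0 := by
      rintro rfl
      rw [Finsupp.mem_support_iff] at hd
      exact hd h0
    rw [← hw, stat_apply w hdne]


/-- the monomial multisymmetric function m_lam. -/
def mfun (R : Type*) [CommRing R] (k n : ℕ) (lam : (Fin k →₀ ℕ) →₀ ℕ) :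
    MvPolynomial (Fin k × Fin n) R := ∑ w ∈ WS k n lam, xpow R w

/-- index finset for the expansion of the product of elementary symmetric functions. -/
def GS (k n : ℕ) (lam : (Fin k →₀ ℕ) →₀ ℕ) : Finset ((↥lam.support) → Finset (Fin n)) :=
  Fintype.piFinset fun d => powersetCard (lam d.1) univ

/-- the degree assignment produced by a choice of subsets. -/
def wg {k n : ℕ} (lam : (Fin k →₀ ℕ) →₀ ℕ) (g : ↥lam.support → Finset (Fin n)) :
    Fin n → (Fin k →₀ ℕ) :=
  fun j => ∑ d : ↥lam.support, if j ∈ g d then (d.1 : Fin k →₀ ℕ) else 0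

lemma wg_apply {lam : (Fin k →₀ ℕ) →₀ ℕ} (g : ↥lam.support → Finset (Fin n))
    (j : Fin n) (h : Fin k) :
    wg lam g j h = ∑ d : ↥lam.support, if j ∈ g d then (d : Fin k →₀ ℕ) h else 0 := by
  unfold wg
  rw [Finsupp.finset_sum_apply]
  refine Finset.sum_congr rfl fun d _ => ?_
  split <;> simp

lemma Pprod_eq (lam : (Fin k →₀ ℕ) →₀ ℕ) :
    ∏ d ∈ lam.support,
        esymVal n (fun j => subst k n (∏ l : Fin k, (X l : MvPolynomial (Fin k) R) ^ (d l)) j)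
          (lam d)
      = ∑ g ∈ GS k n lam, xpow R (wg lam g) := by
  have h1 : ∀ d ∈ lam.support,
      esymVal n (fun j => subst k n (∏ l : Fin k, (X l : MvPolynomial (Fin k) R) ^ (d l)) j)
          (lam d)
        = ∑ A ∈ powersetCard (lam d) univ, ∏ j ∈ A, xd R d j := by
    intro d _
    unfold esymVal
    exact Finset.sum_congr rfl fun A _ => Finset.prod_congr rfl fun j _ => by
      show subst k n (∏ l : Fin k, (X l : MvPolynomial (Fin k) R) ^ (d l)) j = xd R d j
      rw [subst_prod_pow]
  rw [Finset.prod_congr rfl h1, ← Finset.prod_coe_sort]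
  rw [Finset.prod_univ_sum]
  refine Finset.sum_congr rfl fun g hg => ?_
  unfold xd xpow
  have h2 : ∀ d : ↥lam.support, ∏ j ∈ g d,
      (monomial (expOf fun j' => if j' = j then (d : Fin k →₀ ℕ) else 0)) (1 : R)
      = monomial (∑ j ∈ g d, expOf fun j' => if j' = j then (d : Fin k →₀ ℕ) else 0) 1 := by
    intro d
    rw [prod_monomial, prod_const_one]
  rw [Finset.prod_congr rfl fun d _ => h2 d, prod_monomial, prod_const_one]
  have he : (∑ d : ↥lam.support, ∑ j ∈ g d,
      expOf fun j' => if j' = j then (d : Fin k →₀ ℕ) else 0) = expOf (wg lam g) := by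
    ext p
    rw [Finsupp.finset_sum_apply, expOf_apply]
    have h3 : ∀ d : ↥lam.support,
        (∑ j ∈ g d, expOf fun j' => if j' = j then (d : Fin k →₀ ℕ) else 0) p
        = if p.2 ∈ g d then (d : Fin k →₀ ℕ) p.1 else 0 := by
      intro d
      rw [Finsupp.finset_sum_apply]
      have : ∀ j ∈ g d,
          (expOf fun j' => if j' = j then (d : Fin k →₀ ℕ) else 0) p
          = if p.2 = j then (d : Fin k →₀ ℕ) p.1 else 0 := by
        intro j _
        rw [expOf_apply]
        split <;> simp
      rw [Finset.sum_congr rfl this, Finset.sum_ite_eq]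
    rw [Finset.sum_congr rfl fun d _ => h3 d, wg_apply]
  rw [he]

/-- number of chosen subsets containing j. -/
def cnt {k n : ℕ} (lam : (Fin k →₀ ℕ) →₀ ℕ) (g : ↥lam.support → Finset (Fin n))
    (j : Fin n) : ℕ :=
  ∑ d : ↥lam.support, if j ∈ g d then 1 else 0

lemma card_GS_coords {lam : (Fin k →₀ ℕ) →₀ ℕ} {g : ↥lam.support → Finset (Fin n)}
    (hg : g ∈ GS k n lam) (d : ↥lam.support) : (g d).card = lam d.1 := by
  rw [GS, Fintype.mem_piFinset] at hg
  exact (Finset.mem_powersetCard.1 (hg d)).2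

lemma sum_cnt {lam : (Fin k →₀ ℕ) →₀ ℕ} {g : ↥lam.support → Finset (Fin n)}
    (hg : g ∈ GS k n lam) : ∑ j : Fin n, cnt lam g j = tot lam := by
  unfold cnt
  rw [Finset.sum_comm, tot_eq, ← Finset.sum_coe_sort lam.support (fun d => lam d)]
  refine Finset.sum_congr rfl fun d _ => ?_
  rw [Finset.sum_ite_mem univ (g d) (fun _ => (1:ℕ)), Finset.univ_inter, Finset.sum_const,
    smul_eq_mul, mul_one, card_GS_coords hg d]

lemma supp_ne_zero {lam : (Fin k →₀ ℕ) →₀ ℕ} (h0 : lam 0 = 0) (d : ↥lam.support) :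
    (d : Fin k →₀ ℕ) ≠ 0 := by
  intro h
  have := d.2
  rw [Finsupp.mem_support_iff, h] at this
  exact this h0

lemma wg_ne_zero {lam : (Fin k →₀ ℕ) →₀ ℕ} (h0 : lam 0 = 0)
    {g : ↥lam.support → Finset (Fin n)} {j : Fin n} {d : ↥lam.support} (hd : j ∈ g d) :
    wg lam g j ≠ 0 := by
  obtain ⟨h, hh⟩ : ∃ h, (d : Fin k →₀ ℕ) h ≠ 0 := by
    by_contra hc
    push_neg at hc
    exact supp_ne_zero h0 d (Finsupp.ext hc)
  intro hzero
  have h1 : (d : Fin k →₀ ℕ) h ≤ wg lam g j h := by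
    rw [wg_apply]
    have := Finset.single_le_sum (f := fun d' : ↥lam.support =>
      if j ∈ g d' then (d' : Fin k →₀ ℕ) h else 0) (fun _ _ => Nat.zero_le _)
      (Finset.mem_univ d)
    simpa only [if_pos hd] using this
  rw [hzero] at h1
  simp at h1
  exact hh h1

lemma cnt_eq_zero {lam : (Fin k →₀ ℕ) →₀ ℕ} {g : ↥lam.support → Finset (Fin n)} {j : Fin n}
    (h : cnt lam g j = 0) : wg lam g j = 0 := by
  rw [cnt, Finset.sum_eq_zero_iff] at h
  unfold wg
  refine Finset.sum_eq_zero fun d _ => ?_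
  rw [if_neg]
  intro hd
  have := h d (Finset.mem_univ d)
  rw [if_pos hd] at this
  exact one_ne_zero this

lemma wg_ne_zero_iff {lam : (Fin k →₀ ℕ) →₀ ℕ} (h0 : lam 0 = 0)
    {g : ↥lam.support → Finset (Fin n)} {j : Fin n} :
    wg lam g j ≠ 0 ↔ cnt lam g j ≠ 0 := by
  constructor
  · intro h hc
    exact h (cnt_eq_zero hc)
  · intro h
    obtain ⟨d, _, hd⟩ := Finset.exists_ne_zero_of_sum_ne_zero h
    have hj : j ∈ g d := by
      by_contra hj
      rw [if_neg hj] at hd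
      exact hd rfl
    exact wg_ne_zero h0 hj

lemma card_filter_le_tot {lam : (Fin k →₀ ℕ) →₀ ℕ} (h0 : lam 0 = 0)
    {g : ↥lam.support → Finset (Fin n)} (hg : g ∈ GS k n lam) :
    (univ.filter fun j => wg lam g j ≠ 0).card ≤ tot lam := by
  rw [← sum_cnt hg]
  have h1 : ∀ j ∈ univ.filter fun j => wg lam g j ≠ 0,
      (1 : ℕ) ≤ cnt lam g j := by
    intro j hj
    have := (wg_ne_zero_iff h0).1 (Finset.mem_filter.1 hj).2
    omega
  calc (univ.filter fun j => wg lam g j ≠ 0).card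
        = ∑ j ∈ univ.filter (fun j => wg lam g j ≠ 0), 1 := Finset.card_eq_sum_ones _
    _ ≤ ∑ j ∈ univ.filter (fun j => wg lam g j ≠ 0), cnt lam g j := Finset.sum_le_sum h1
    _ ≤ ∑ j : Fin n, cnt lam g j := Finset.sum_le_sum_of_subset (Finset.filter_subset _ _)

lemma tot_stat_wg_le {lam : (Fin k →₀ ℕ) →₀ ℕ} (h0 : lam 0 = 0)
    {g : ↥lam.support → Finset (Fin n)} (hg : g ∈ GS k n lam) :
    tot (stat (wg lam g)) ≤ tot lam := by
  rw [tot_stat]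
  exact card_filter_le_tot h0 hg

lemma cnt_one {lam : (Fin k →₀ ℕ) →₀ ℕ} (h0 : lam 0 = 0)
    {g : ↥lam.support → Finset (Fin n)} (hg : g ∈ GS k n lam)
    (heq : tot (stat (wg lam g)) = tot lam) {j : Fin n} (hj : wg lam g j ≠ 0) :
    cnt lam g j = 1 := by
  by_contra hc
  have h2 : 2 ≤ cnt lam g j := by
    have := (wg_ne_zero_iff h0).1 hj
    omega
  have hlt : (univ.filter fun j => wg lam g j ≠ 0).card < ∑ j' : Fin n, cnt lam g j' := by
    rw [Finset.card_eq_sum_ones]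
    calc ∑ j' ∈ univ.filter (fun j' => wg lam g j' ≠ 0), 1
        < ∑ j' ∈ univ.filter (fun j' => wg lam g j' ≠ 0), cnt lam g j' := by
          refine Finset.sum_lt_sum (fun i hi => ?_) ⟨j, ?_, by omega⟩
          · have := (wg_ne_zero_iff h0).1 (Finset.mem_filter.1 hi).2
            omega
          · exact Finset.mem_filter.2 ⟨Finset.mem_univ j, hj⟩
      _ ≤ ∑ j' : Fin n, cnt lam g j' :=
          Finset.sum_le_sum_of_subset (Finset.filter_subset _ _)
  rw [sum_cnt hg] at hlt
  rw [tot_stat] at heq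
  omega

lemma mem_unique {lam : (Fin k →₀ ℕ) →₀ ℕ} (h0 : lam 0 = 0)
    {g : ↥lam.support → Finset (Fin n)} (hg : g ∈ GS k n lam)
    (heq : tot (stat (wg lam g)) = tot lam) {j : Fin n} {d d' : ↥lam.support}
    (hd : j ∈ g d) (hd' : j ∈ g d') : d = d' := by
  by_contra hne
  have h1 := cnt_one h0 hg heq (wg_ne_zero h0 hd)
  have h2 : 2 ≤ cnt lam g j := by
    have : ∑ e ∈ ({d, d'} : Finset ↥lam.support), (if j ∈ g e then 1 else 0)
        ≤ cnt lam g j := Finset.sum_le_sum_of_subset (Finset.subset_univ _)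
    rwa [Finset.sum_pair hne, if_pos hd, if_pos hd'] at this
  omega

lemma wg_eq_of_mem {lam : (Fin k →₀ ℕ) →₀ ℕ} (h0 : lam 0 = 0)
    {g : ↥lam.support → Finset (Fin n)} (hg : g ∈ GS k n lam)
    (heq : tot (stat (wg lam g)) = tot lam) {j : Fin n} {d : ↥lam.support}
    (hd : j ∈ g d) : wg lam g j = (d : Fin k →₀ ℕ) := by
  unfold wg
  rw [Finset.sum_eq_single d]
  · rw [if_pos hd]
  · intro d' _ hne
    rw [if_neg]
    intro hd'
    exact hne (mem_unique h0 hg heq hd' hd)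
  · intro h
    exact absurd (Finset.mem_univ d) h

lemma g_eq_fiber {lam : (Fin k →₀ ℕ) →₀ ℕ} (h0 : lam 0 = 0)
    {g : ↥lam.support → Finset (Fin n)} (hg : g ∈ GS k n lam)
    (heq : tot (stat (wg lam g)) = tot lam) (d : ↥lam.support) :
    g d = univ.filter fun j => wg lam g j = (d : Fin k →₀ ℕ) := by
  ext j
  rw [Finset.mem_filter]
  constructor
  · intro hj
    exact ⟨Finset.mem_univ j, wg_eq_of_mem h0 hg heq hj⟩
  · rintro ⟨-, hj⟩
    have hne : wg lam g j ≠ 0 := hj ▸ supp_ne_zero h0 d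
    obtain ⟨d', _, hd'⟩ := Finset.exists_ne_zero_of_sum_ne_zero ((wg_ne_zero_iff h0).1 hne)
    have hjd' : j ∈ g d' := by
      by_contra hc
      rw [if_neg hc] at hd'
      exact hd' rfl
    have := wg_eq_of_mem h0 hg heq hjd'
    have hdd' : d' = d := Subtype.ext (by rw [← this, hj])
    exact hdd' ▸ hjd'

lemma stat_wg_eq {lam : (Fin k →₀ ℕ) →₀ ℕ} (h0 : lam 0 = 0)
    {g : ↥lam.support → Finset (Fin n)} (hg : g ∈ GS k n lam)
    (heq : tot (stat (wg lam g)) = tot lam) : stat (wg lam g) = lam := by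
  ext d
  by_cases hd0 : d = 0
  · rw [hd0, stat_apply_zero, h0]
  · rw [stat_apply _ hd0]
    by_cases hds : d ∈ lam.support
    · rw [← g_eq_fiber h0 hg heq ⟨d, hds⟩, card_GS_coords hg ⟨d, hds⟩]
    · rw [Finsupp.notMem_support_iff.1 hds, Finset.card_eq_zero,
        Finset.filter_eq_empty_iff]
      intro j _ hj
      have hne : wg lam g j ≠ 0 := hj ▸ hd0
      obtain ⟨d', _, hd'⟩ := Finset.exists_ne_zero_of_sum_ne_zero ((wg_ne_zero_iff h0).1 hne)
      have hjd' : j ∈ g d' := by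
        by_contra hc
        rw [if_neg hc] at hd'
        exact hd' rfl
      have h5 := wg_eq_of_mem h0 hg heq hjd'
      have h6 : d = (d' : Fin k →₀ ℕ) := by rw [← hj, h5]
      exact hds (h6 ▸ d'.2)

/-- the canonical system of subsets attached to a degree assignment. -/
def gOf {k n : ℕ} (lam : (Fin k →₀ ℕ) →₀ ℕ) (w : Fin n → (Fin k →₀ ℕ)) :
    ↥lam.support → Finset (Fin n) :=
  fun d => univ.filter fun j => w j = (d : Fin k →₀ ℕ)

lemma gOf_mem {lam : (Fin k →₀ ℕ) →₀ ℕ} {w : Fin n → (Fin k →₀ ℕ)}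
    (hw : w ∈ WS k n lam) : gOf lam w ∈ GS k n lam := by
  rw [GS, Fintype.mem_piFinset]
  intro d
  rw [Finset.mem_powersetCard]
  exact ⟨Finset.filter_subset _ _ |>.trans (Finset.subset_univ _), (mem_WS.1 hw).2 _ d.2⟩

lemma wg_gOf {lam : (Fin k →₀ ℕ) →₀ ℕ} (h0 : lam 0 = 0) {w : Fin n → (Fin k →₀ ℕ)}
    (hw : w ∈ WS k n lam) : wg lam (gOf lam w) = w := by
  funext j
  unfold wg gOf
  by_cases hj : w j = 0
  · rw [Finset.sum_eq_zero, hj]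
    intro d _
    rw [if_neg]
    intro hmem
    rw [Finset.mem_filter] at hmem
    exact supp_ne_zero h0 d (hmem.2 ▸ hj)
  · have hsupp : w j ∈ lam.support := ((mem_WS.1 hw).1 j).resolve_left hj
    rw [Finset.sum_eq_single (⟨w j, hsupp⟩ : ↥lam.support)]
    · have hmem : j ∈ univ.filter fun j' => w j' = ((⟨w j, hsupp⟩ : ↥lam.support) : Fin k →₀ ℕ) :=
        Finset.mem_filter.2 ⟨Finset.mem_univ j, rfl⟩
      rw [if_pos hmem]
    · intro d _ hne
      rw [if_neg]
      intro hmem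
      rw [Finset.mem_filter] at hmem
      exact hne (Subtype.ext hmem.2.symm)
    · intro h
      exact absurd (Finset.mem_univ _) h

lemma filter_wg_eq_singleton {lam : (Fin k →₀ ℕ) →₀ ℕ} (h0 : lam 0 = 0)
    {w : Fin n → (Fin k →₀ ℕ)} (hw : w ∈ WS k n lam) :
    (GS k n lam).filter (fun g => wg lam g = w) = {gOf lam w} := by
  rw [Finset.eq_singleton_iff_unique_mem]
  constructor
  · exact Finset.mem_filter.2 ⟨gOf_mem hw, wg_gOf h0 hw⟩
  · rintro g hg
    obtain ⟨hgGS, hgw⟩ := Finset.mem_filter.1 hg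
    have heq : tot (stat (wg lam g)) = tot lam := by
      rw [hgw, stat_eq_of_mem_WS h0 hw]
    funext d
    rw [g_eq_fiber h0 hgGS heq d, gOf]
    simp only [hgw]

/-- action of a permutation on a system of subsets. -/
def act {k n : ℕ} {lam : (Fin k →₀ ℕ) →₀ ℕ} (τ : Equiv.Perm (Fin n))
    (g : ↥lam.support → Finset (Fin n)) : ↥lam.support → Finset (Fin n) :=
  fun d => (g d).map τ.toEmbedding

lemma act_mem {lam : (Fin k →₀ ℕ) →₀ ℕ} (τ : Equiv.Perm (Fin n))
    {g : ↥lam.support → Finset (Fin n)} (hg : g ∈ GS k n lam) :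
    act τ g ∈ GS k n lam := by
  rw [GS, Fintype.mem_piFinset] at hg ⊢
  intro d
  rw [Finset.mem_powersetCard]
  exact ⟨Finset.subset_univ _, by
    rw [act, Finset.card_map, (Finset.mem_powersetCard.1 (hg d)).2]⟩

lemma act_act {lam : (Fin k →₀ ℕ) →₀ ℕ} (τ : Equiv.Perm (Fin n))
    (g : ↥lam.support → Finset (Fin n)) : act τ.symm (act τ g) = g := by
  funext d
  unfold act
  rw [Finset.map_map]
  ext j
  simp

lemma wg_act {lam : (Fin k →₀ ℕ) →₀ ℕ} (τ : Equiv.Perm (Fin n))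
    (g : ↥lam.support → Finset (Fin n)) (j : Fin n) :
    wg lam (act τ g) j = wg lam g (τ.symm j) := by
  unfold wg act
  refine Finset.sum_congr rfl fun d _ => ?_
  congr 1
  simp [Finset.mem_map_equiv]

lemma card_filter_wg_congr {lam lam' : (Fin k →₀ ℕ) →₀ ℕ} (h0' : lam' 0 = 0)
    {w w' : Fin n → (Fin k →₀ ℕ)} (hw : w ∈ WS k n lam') (hw' : w' ∈ WS k n lam') :
    ((GS k n lam).filter fun g => wg lam g = w).card
      = ((GS k n lam).filter fun g => wg lam g = w').card := by
  have hstat : stat w = lam' := stat_eq_of_mem_WS h0' hw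
  have hstat' : stat w' = lam' := stat_eq_of_mem_WS h0' hw'
  have hcards : ∀ v : Fin k →₀ ℕ,
      Fintype.card {a : Fin n // w a = v} = Fintype.card {b : Fin n // w' b = v} := by
    intro v
    rw [Fintype.card_subtype, Fintype.card_subtype]
    by_cases hv : v = 0
    · subst hv
      have e1 := Finset.card_filter_add_card_filter_not
        (s := (univ : Finset (Fin n))) (p := fun j => w j = 0)
      have e2 := Finset.card_filter_add_card_filter_not
        (s := (univ : Finset (Fin n))) (p := fun j => w' j = 0)
      have e3 : (univ.filter fun j => ¬ w j = 0).card = tot lam' := by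
        rw [← hstat, tot_stat]
      have e4 : (univ.filter fun j => ¬ w' j = 0).card = tot lam' := by
        rw [← hstat', tot_stat]
      omega
    · rw [← stat_apply w hv, ← stat_apply w' hv, hstat, hstat']
  have σprop := fun a => Equiv.ofFiberEquiv_map (f := w) (g := w')
    (fun v => Fintype.equivOfCardEq (hcards v)) a
  set σ := Equiv.ofFiberEquiv (f := w) (g := w') (fun v => Fintype.equivOfCardEq (hcards v))
  refine Finset.card_bij' (fun g _ => act σ g) (fun g _ => act σ.symm g) ?_ ?_ ?_ ?_
  · intro g hg
    obtain ⟨hgGS, hgw⟩ := Finset.mem_filter.1 hg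
    refine Finset.mem_filter.2 ⟨act_mem σ hgGS, ?_⟩
    funext j
    rw [wg_act, hgw]
    have h5 := σprop (σ.symm j)
    rw [Equiv.apply_symm_apply] at h5
    exact h5.symm
  · intro g hg
    obtain ⟨hgGS, hgw⟩ := Finset.mem_filter.1 hg
    refine Finset.mem_filter.2 ⟨act_mem σ.symm hgGS, ?_⟩
    funext j
    rw [wg_act, hgw, Equiv.symm_symm, σprop j]
  · intro g _
    exact act_act σ g
  · intro g _
    have := act_act σ.symm g
    rwa [Equiv.symm_symm] at this

/-- the part of the expansion of the product with fiber statistics lam'. -/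
def classSum (R : Type*) [CommRing R] (k n : ℕ) (lam lam' : (Fin k →₀ ℕ) →₀ ℕ) :
    MvPolynomial (Fin k × Fin n) R :=
  ∑ g ∈ (GS k n lam).filter (fun g => stat (wg lam g) = lam'), xpow R (wg lam g)

lemma classSum_eq {lam lam' : (Fin k →₀ ℕ) →₀ ℕ} (h0' : lam' 0 = 0) :
    classSum R k n lam lam'
      = ∑ w ∈ WS k n lam',
          ((GS k n lam).filter fun g => wg lam g = w).card • xpow R w := by
  rw [classSum,
    ← Finset.sum_fiberwise_of_maps_to (g := fun g => wg lam g) (t := WS k n lam')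
      (fun g hg => mem_WS_of_stat_eq h0' (Finset.mem_filter.1 hg).2)]
  refine Finset.sum_congr rfl fun w hw => ?_
  have hfil : ((GS k n lam).filter fun g => stat (wg lam g) = lam').filter
      (fun g => wg lam g = w) = (GS k n lam).filter fun g => wg lam g = w := by
    rw [Finset.filter_filter]
    refine Finset.filter_congr fun g _ => ?_
    constructor
    · exact fun h => h.2
    · intro h
      exact ⟨h ▸ stat_eq_of_mem_WS h0' hw, h⟩
  rw [hfil, Finset.sum_congr rfl fun g hg => ?_, Finset.sum_const]
  show xpow R (wg lam g) = xpow R w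
  rw [(Finset.mem_filter.1 hg).2]

lemma classSum_smul {lam lam' : (Fin k →₀ ℕ) →₀ ℕ} (h0' : lam' 0 = 0) :
    ∃ N : ℕ, classSum R k n lam lam' = N • mfun R k n lam' := by
  rcases Finset.eq_empty_or_nonempty (WS k n lam') with hWS | ⟨w₀, hw₀⟩
  · refine ⟨0, ?_⟩
    rw [classSum_eq h0', hWS]
    simp
  · refine ⟨((GS k n lam).filter fun g => wg lam g = w₀).card, ?_⟩
    rw [classSum_eq h0', mfun, Finset.smul_sum]
    refine Finset.sum_congr rfl fun w hw => ?_
    rw [card_filter_wg_congr h0' hw hw₀]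

lemma classSum_self {lam : (Fin k →₀ ℕ) →₀ ℕ} (h0 : lam 0 = 0) :
    classSum R k n lam lam = mfun R k n lam := by
  rw [classSum_eq h0, mfun]
  refine Finset.sum_congr rfl fun w hw => ?_
  rw [filter_wg_eq_singleton h0 hw, Finset.card_singleton, one_smul]

/-- the generator set. -/
def genSet (R : Type*) [CommRing R] (k n : ℕ) : Set (MvPolynomial (Fin k × Fin n) R) :=
  {q | ∃ i : ℕ, 1 ≤ i ∧ i ≤ n ∧ ∃ c : Fin k → ℕ, c ≠ 0 ∧
      q = esymVal n (fun j => subst k n (∏ l : Fin k, (X l : MvPolynomial (Fin k) R) ^ c l) j) i}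

lemma Pprod_mem {lam : (Fin k →₀ ℕ) →₀ ℕ} (h0 : lam 0 = 0) (hn : tot lam ≤ n) :
    (∏ d ∈ lam.support,
        esymVal n (fun j => subst k n (∏ l : Fin k, (X l : MvPolynomial (Fin k) R) ^ (d l)) j)
          (lam d))
      ∈ Algebra.adjoin R (genSet R k n) := by
  refine Subalgebra.prod_mem _ fun d hd => Algebra.subset_adjoin ?_
  refine ⟨lam d, ?_, ?_, ⇑d, ?_, rfl⟩
  · have := Finsupp.mem_support_iff.1 hd
    omega
  · calc lam d ≤ ∑ d' ∈ lam.support, lam d' :=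
        Finset.single_le_sum (fun _ _ => Nat.zero_le _) hd
      _ ≤ n := by rw [← tot_eq]; exact hn
  · intro hc
    exact supp_ne_zero h0 ⟨d, hd⟩ (Finsupp.ext fun x => by rw [congrFun hc x]; rfl)

lemma mfun_mem : ∀ (N : ℕ) (lam : (Fin k →₀ ℕ) →₀ ℕ), lam 0 = 0 → tot lam ≤ n →
    tot lam = N → mfun R k n lam ∈ Algebra.adjoin R (genSet R k n) := by
  intro N
  induction N using Nat.strong_induction_on with
  | _ N ih =>
    intro lam h0 hn hN
    rcases Finset.eq_empty_or_nonempty (WS k n lam) with hWS | ⟨w₀, hw₀⟩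
    · rw [mfun, hWS, Finset.sum_empty]
      exact Subalgebra.zero_mem _
    · set T : Finset ((Fin k →₀ ℕ) →₀ ℕ) :=
        (GS k n lam).image (fun g => stat (wg lam g)) with hT
      have hlamT : lam ∈ T := by
        refine Finset.mem_image.2 ⟨gOf lam w₀, gOf_mem hw₀, ?_⟩
        rw [wg_gOf h0 hw₀]
        exact stat_eq_of_mem_WS h0 hw₀
      have key : ∑ g ∈ GS k n lam, xpow R (wg lam g)
          = ∑ lam' ∈ T, classSum R k n lam lam' :=
        (Finset.sum_fiberwise_of_maps_to
          (fun g hg => Finset.mem_image_of_mem _ hg) _).symm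
      have hsplit : mfun R k n lam
          = (∏ d ∈ lam.support,
              esymVal n
                (fun j => subst k n (∏ l : Fin k, (X l : MvPolynomial (Fin k) R) ^ (d l)) j)
                (lam d))
            - ∑ lam' ∈ T.erase lam, classSum R k n lam lam' := by
        rw [Pprod_eq, key, ← Finset.add_sum_erase T _ hlamT, classSum_self h0]
        ring
      rw [hsplit]
      refine Subalgebra.sub_mem _ (Pprod_mem h0 hn) (Subalgebra.sum_mem _ fun lam' hl' => ?_)
      obtain ⟨hl'T, hlne⟩ : lam' ∈ T ∧ lam' ≠ lam := by
        have h1 := Finset.mem_erase.1 hl'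
        exact ⟨h1.2, h1.1⟩
      obtain ⟨g₁, hg₁, hstat₁⟩ := Finset.mem_image.1 hl'T
      have h0' : lam' 0 = 0 := by rw [← hstat₁, stat_apply_zero]
      have hlt : tot lam' < N := by
        have hle : tot lam' ≤ tot lam := by
          rw [← hstat₁]
          exact tot_stat_wg_le h0 hg₁
        rcases lt_or_eq_of_le hle with h | h
        · omega
        · exfalso
          exact hlne (by rw [← hstat₁, stat_wg_eq h0 hg₁ (by rw [hstat₁, h])])
      obtain ⟨N', hN'⟩ := classSum_smul (R := R) (lam := lam) h0'
      rw [hN']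
      exact nsmul_mem (ih (tot lam') hlt lam' h0' (by omega) rfl) N'

lemma subst_X (h : Fin k) (j : Fin n) :
    subst k n (X h : MvPolynomial (Fin k) R) j = X (h, j) := by
  rw [subst, rename_X]

lemma single_one_ne_zero (h : Fin k) : (Finsupp.single h 1 : Fin k →₀ ℕ) ≠ 0 := by
  simp [Finsupp.single_eq_zero]

lemma xd_zero (j : Fin n) : xd R (0 : Fin k →₀ ℕ) j = 1 := by
  unfold xd xpow
  have h1 : expOf (fun j' : Fin n => if j' = j then (0 : Fin k →₀ ℕ) else 0) = 0 := by
    ext p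
    rw [expOf_apply, ite_self]
    simp
  rw [h1, monomial_zero', C_1]

lemma xd_single (h : Fin k) (j : Fin n) :
    xd R (Finsupp.single h 1) j = X (h, j) := by
  unfold xd xpow
  have h1 : expOf (fun j' : Fin n => if j' = j then Finsupp.single h 1 else 0)
      = Finsupp.single ((h, j) : Fin k × Fin n) 1 := by
    ext p
    rw [expOf_apply, Finsupp.single_apply]
    rcases p with ⟨h', j'⟩
    by_cases hj : j' = j
    · subst hj
      rw [if_pos rfl, Finsupp.single_apply]
      simp [Prod.ext_iff, eq_comm]
    · rw [if_neg hj, if_neg (by simp [Prod.ext_iff]; tauto)]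
      simp
  rw [h1, ← pow_one (X ((h, j) : Fin k × Fin n) : MvPolynomial (Fin k × Fin n) R),
    X_pow_eq_monomial]

/-- the multiplicity function of monomials μ = x_h with multiplicity α h. -/
def lamOf {k : ℕ} (α : Fin k → ℕ) : (Fin k →₀ ℕ) →₀ ℕ :=
  ∑ h : Fin k, Finsupp.single (Finsupp.single h 1) (α h)

lemma lamOf_apply {α : Fin k → ℕ} (d : Fin k →₀ ℕ) :
    lamOf α d = ∑ h : Fin k, if Finsupp.single h 1 = d then α h else 0 := by
  rw [lamOf, Finsupp.finset_sum_apply]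
  exact Finset.sum_congr rfl fun h _ => Finsupp.single_apply

lemma lamOf_apply_single {α : Fin k → ℕ} (h : Fin k) :
    lamOf α (Finsupp.single h 1) = α h := by
  rw [lamOf_apply]
  rw [Finset.sum_eq_single h]
  · rw [if_pos rfl]
  · intro h' _ hne
    rw [if_neg fun hc => hne (Finsupp.single_left_injective one_ne_zero hc)]
  · intro hc
    exact absurd (Finset.mem_univ h) hc

lemma lamOf_zero {α : Fin k → ℕ} : lamOf α 0 = 0 := by
  rw [lamOf_apply]
  refine Finset.sum_eq_zero fun h _ => ?_
  rw [if_neg (single_one_ne_zero h)]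

lemma mem_supp_lamOf {α : Fin k → ℕ} {d : Fin k →₀ ℕ} :
    d ∈ (lamOf α).support ↔ ∃ h, d = Finsupp.single h 1 ∧ α h ≠ 0 := by
  rw [Finsupp.mem_support_iff]
  constructor
  · intro hd
    rw [lamOf_apply] at hd
    obtain ⟨h, _, hh⟩ := Finset.exists_ne_zero_of_sum_ne_zero hd
    have h1 : Finsupp.single h 1 = d := by
      by_contra hc
      rw [if_neg hc] at hh
      exact hh rfl
    refine ⟨h, h1.symm, ?_⟩
    rw [if_pos h1] at hh
    exact hh
  · rintro ⟨h, rfl, hh⟩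
    rw [lamOf_apply_single]
    exact hh

lemma tot_lamOf {α : Fin k → ℕ} : tot (lamOf α) = ∑ h, α h := by
  rw [tot, lamOf, ← Finsupp.sum_finset_sum_index (by simp) (by intros; rfl)]
  refine Finset.sum_congr rfl fun h _ => ?_
  exact Finsupp.sum_single_index rfl

/-- assignment of monomials from a choice function. -/
def wOf {k n : ℕ} (φ : Fin n → Option (Fin k)) : Fin n → (Fin k →₀ ℕ) :=
  fun j => (φ j).elim 0 fun h => Finsupp.single h 1

lemma wOf_none {φ : Fin n → Option (Fin k)} {j : Fin n} (h : φ j = none) :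
    wOf φ j = 0 := by unfold wOf; rw [h]; rfl

lemma wOf_some {φ : Fin n → Option (Fin k)} {j : Fin n} {h' : Fin k} (h : φ j = some h') :
    wOf φ j = Finsupp.single h' 1 := by unfold wOf; rw [h]; rfl

lemma eAlpha_X (α : Fin k → ℕ) :
    eAlpha k n (fun h => (X h : MvPolynomial (Fin k) R)) α = mfun R k n (lamOf α) := by
  have step1 : ∀ j : Fin n,
      (1 + ∑ h : Fin k, (X h : MvPolynomial (Fin k) (MvPolynomial (Fin k × Fin n) R))
          * C (subst k n (X h : MvPolynomial (Fin k) R) j))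
        = ∑ o : Option (Fin k),
            o.elim 1 (fun h => (X h : MvPolynomial (Fin k) (MvPolynomial (Fin k × Fin n) R))
              * C (X (h, j))) := by
    intro j
    rw [Fintype.sum_option]
    congr 1
    refine Finset.sum_congr rfl fun h _ => ?_
    rw [subst_X]
    rfl
  have step3 : ∀ φ : Fin n → Option (Fin k),
      (∏ j : Fin n, (φ j).elim 1
          (fun h => (X h : MvPolynomial (Fin k) (MvPolynomial (Fin k × Fin n) R))
            * C (X (h, j))))
        = monomial (∑ j : Fin n, wOf φ j) (xpow R (wOf φ)) := by
    intro φ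
    have hper : ∀ j : Fin n, (φ j).elim 1
          (fun h => (X h : MvPolynomial (Fin k) (MvPolynomial (Fin k × Fin n) R))
            * C (X (h, j)))
        = monomial (wOf φ j) (xd R (wOf φ j) j) := by
      intro j
      rcases hφ : φ j with _ | h
      · show (1 : MvPolynomial (Fin k) (MvPolynomial (Fin k × Fin n) R))
            = monomial (wOf φ j) (xd R (wOf φ j) j)
        rw [wOf_none hφ, xd_zero, monomial_zero', C_1]
      · show (X h : MvPolynomial (Fin k) (MvPolynomial (Fin k × Fin n) R)) * C (X (h, j))
            = monomial (wOf φ j) (xd R (wOf φ j) j)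
        rw [wOf_some hφ, xd_single, C_apply,
          ← pow_one (X h : MvPolynomial (Fin k) (MvPolynomial (Fin k × Fin n) R)),
          X_pow_eq_monomial, monomial_mul]
        simp
    rw [Finset.prod_congr rfl fun j _ => hper j, prod_monomial, ← prod_xd (w := wOf φ)]
  have hbet : ∀ φ : Fin n → Option (Fin k),
      (∑ j : Fin n, wOf φ j)
        = Finsupp.equivFunOnFinite.symm
            (fun h => (univ.filter fun j => φ j = some h).card) := by
    intro φ
    ext h
    rw [Finsupp.finset_sum_apply, Finsupp.equivFunOnFinite_symm_apply_apply,
      Finset.card_filter]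
    refine Finset.sum_congr rfl fun j _ => ?_
    rcases hφ : φ j with _ | h'
    · rw [wOf_none hφ, if_neg (by simp [hφ])]
      rfl
    · rw [wOf_some hφ, Finsupp.single_apply]
      by_cases hh : h' = h
      · subst hh
        rw [if_pos rfl, if_pos rfl]
      · rw [if_neg hh, if_neg (by simp [hh])]
  rw [eAlpha, Finset.prod_congr rfl fun j _ => step1 j, Finset.prod_univ_sum,
    Fintype.piFinset_univ, coeff_sum]
  have step4 : ∀ φ : Fin n → Option (Fin k),
      coeff (Finsupp.equivFunOnFinite.symm α)
          (∏ j : Fin n, (φ j).elim 1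
            (fun h => (X h : MvPolynomial (Fin k) (MvPolynomial (Fin k × Fin n) R))
              * C (X (h, j))))
        = if (Finsupp.equivFunOnFinite.symm
              (fun h => (univ.filter fun j => φ j = some h).card) : Fin k →₀ ℕ)
            = Finsupp.equivFunOnFinite.symm α
          then xpow R (wOf φ) else 0 := by
    intro φ
    rw [step3 φ, hbet φ, coeff_monomial]
  rw [Finset.sum_congr rfl fun φ _ => step4 φ, ← Finset.sum_filter]
  rw [mfun]
  have hcond : ∀ φ : Fin n → Option (Fin k),
      ((Finsupp.equivFunOnFinite.symm
          (fun h => (univ.filter fun j => φ j = some h).card) : Fin k →₀ ℕ)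
        = Finsupp.equivFunOnFinite.symm α)
        ↔ ∀ h, (univ.filter fun j => φ j = some h).card = α h := by
    intro φ
    rw [Finsupp.equivFunOnFinite.symm.injective.eq_iff]
    exact funext_iff
  refine Finset.sum_nbij wOf ?_ ?_ ?_ ?_
  · intro φ hφ
    have hφ' := (hcond φ).1 (Finset.mem_filter.1 hφ).2
    rw [mem_WS]
    constructor
    · intro j
      rcases hj : φ j with _ | h
      · left; exact wOf_none hj
      · right
        rw [wOf_some hj]
        rw [Finsupp.mem_support_iff, lamOf_apply_single, ← hφ' h]
        rw [← Nat.pos_iff_ne_zero, Finset.card_pos]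
        exact ⟨j, Finset.mem_filter.2 ⟨Finset.mem_univ j, hj⟩⟩
    · intro d hd
      obtain ⟨h, rfl, hh⟩ := mem_supp_lamOf.1 hd
      rw [lamOf_apply_single, ← hφ' h]
      congr 1
      refine Finset.filter_congr fun j _ => ?_
      rcases hj : φ j with _ | h'
      · rw [wOf_none hj]
        constructor
        · intro hc
          exact absurd hc.symm (single_one_ne_zero h)
        · intro hc
          exact absurd hc (by simp)
      · rw [wOf_some hj]
        constructor
        · intro hc
          rw [Finsupp.single_left_injective one_ne_zero hc]
        · intro hc
          rw [Option.some_inj.1 hc]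
  · intro φ hφ φ' hφ' heq
    funext j
    have hj := congrFun heq j
    rcases h1 : φ j with _ | h <;> rcases h2 : φ' j with _ | h'
    · rfl
    · rw [wOf_none h1, wOf_some h2] at hj
      exact absurd hj.symm (single_one_ne_zero h')
    · rw [wOf_some h1, wOf_none h2] at hj
      exact absurd hj (single_one_ne_zero h)
    · rw [wOf_some h1, wOf_some h2] at hj
      rw [Finsupp.single_left_injective one_ne_zero hj]
    
  · intro w hw
    have hw' := mem_WS.1 (Finset.mem_coe.1 hw)
    classical
    set φ : Fin n → Option (Fin k) :=
      fun j => if hj : ∃ h, w j = Finsupp.single h 1 then some hj.choose else none with hφdef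
    have hkey : ∀ j h, φ j = some h ↔ w j = Finsupp.single h 1 := by
      intro j h
      by_cases hj : ∃ h', w j = Finsupp.single h' 1
      · have hφj : φ j = some hj.choose := by
          simp only [hφdef]
          rw [dif_pos hj]
        rw [hφj]
        constructor
        · intro hc
          rw [← Option.some_inj.1 hc]
          exact hj.choose_spec
        · intro hc
          have h5 := hj.choose_spec
          exact congrArg some (Finsupp.single_left_injective one_ne_zero (h5.symm.trans hc))
      · have hφj : φ j = none := by
          simp only [hφdef]
          rw [dif_neg hj]
        rw [hφj]
        constructor
        · intro hc
          exact absurd hc (by simp)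
        · intro hc
          exact absurd ⟨h, hc⟩ hj
    have hwOf : wOf φ = w := by
      funext j
      rcases hj : φ j with _ | h
      · rw [wOf_none hj]
        rcases hw'.1 j with h1 | h1
        · exact h1.symm
        · obtain ⟨h, hh, -⟩ := mem_supp_lamOf.1 h1
          exact absurd ((hkey j h).2 hh) (by rw [hj]; simp)
      · rw [wOf_some hj]
        exact ((hkey j h).1 hj).symm
    refine ⟨φ, Finset.mem_coe.2 (Finset.mem_filter.2 ⟨Finset.mem_univ φ, (hcond φ).2 ?_⟩), hwOf⟩
    intro h
    have hfil : (univ.filter fun j => φ j = some h)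
        = univ.filter fun j => w j = Finsupp.single h 1 := by
      refine Finset.filter_congr fun j _ => ?_
      rw [hkey j h]
    rw [hfil]
    by_cases hsupp : Finsupp.single h (1:ℕ) ∈ (lamOf α).support
    · rw [hw'.2 _ hsupp, lamOf_apply_single]
    · have h1 : α h = 0 := by
        by_contra hc
        exact hsupp (mem_supp_lamOf.2 ⟨h, rfl, hc⟩)
      rw [h1, Finset.card_eq_zero, Finset.filter_eq_empty_iff]
      intro j _ hc
      rcases hw'.1 j with h2 | h2
      · rw [hc] at h2
        exact single_one_ne_zero h h2
      · rw [hc] at h2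
        exact hsupp h2
  · intro φ hφ
    rfl

end Stmt11Aux

open Stmt11Aux

/-- every e_{(α₁,…,α_k)}(a₁,…,a_k) lies in the subring of A_R(n,m)^{Sₙ}
generated by the eᵢ(μ), 1 ≤ i ≤ n, μ a monomial in a₁,…,a_k. -/
theorem stmt11 (R : Type*) [CommRing R] (m n k : ℕ)
    (a : Fin k → MvPolynomial (Fin m) R) (α : Fin k → ℕ) (hα : ∑ i, α i ≤ n) :
    eAlpha m n a α ∈ Algebra.adjoin R
      {q : MvPolynomial (Fin m × Fin n) R | ∃ i : ℕ, 1 ≤ i ∧ i ≤ n ∧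
        ∃ c : Fin k → ℕ, c ≠ 0 ∧
          q = esymVal n (fun j => subst m n (∏ l : Fin k, a l ^ c l) j) i} := by
  classical
  set φm : MvPolynomial (Fin k × Fin n) R →ₐ[R] MvPolynomial (Fin m × Fin n) R :=
    aeval (fun p : Fin k × Fin n => subst m n (a p.1) p.2) with hφm
  have hsubst : ∀ (f : MvPolynomial (Fin k) R) (j : Fin n),
      φm (subst k n f j) = subst m n (aeval a f) j := by
    intro f j
    have hcomp : (φm.comp (rename (fun i : Fin k => (i, j))))
        = ((rename (fun i : Fin m => (i, j)) : MvPolynomial (Fin m) R →ₐ[R]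
              MvPolynomial (Fin m × Fin n) R).comp (aeval a)) := by
      refine MvPolynomial.algHom_ext fun i => ?_
      simp [hφm, subst]
    have := congrArg (fun ψ => ψ f) hcomp
    simpa [subst] using this
  have h1 : φm (eAlpha k n (fun h => (X h : MvPolynomial (Fin k) R)) α) = eAlpha m n a α := by
    rw [eAlpha, eAlpha]
    show φm.toRingHom (coeff (Finsupp.equivFunOnFinite.symm α)
      (∏ i : Fin n, (1 + ∑ h : Fin k, X h * C (subst k n (X h) i)))) = _
    rw [← MvPolynomial.coeff_map]
    congr 1
    rw [map_prod]
    refine Finset.prod_congr rfl fun j _ => ?_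
    rw [map_add, map_one, map_sum]
    congr 1
    refine Finset.sum_congr rfl fun h _ => ?_
    rw [map_mul, MvPolynomial.map_X, MvPolynomial.map_C]
    congr 1
    show C (φm (subst k n (X h) j)) = _
    rw [hsubst, aeval_X]
  have htot : tot (lamOf α) ≤ n := by rw [tot_lamOf]; exact hα
  have h2 := mfun_mem (R := R) (k := k) (n := n) (tot (lamOf α)) (lamOf α)
    lamOf_zero htot rfl
  have h3 : eAlpha k n (fun h => (X h : MvPolynomial (Fin k) R)) α
      ∈ Algebra.adjoin R (genSet R k n) := by
    rw [eAlpha_X]; exact h2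
  have h4 : φm (eAlpha k n (fun h => (X h : MvPolynomial (Fin k) R)) α)
      ∈ (Algebra.adjoin R (genSet R k n)).map φm := ⟨_, h3, rfl⟩
  rw [AlgHom.map_adjoin] at h4
  rw [← h1]
  refine Algebra.adjoin_mono ?_ h4
  rintro q ⟨p, ⟨i, hi1, hi2, c, hc, rfl⟩, rfl⟩
  refine ⟨i, hi1, hi2, c, hc, ?_⟩
  rw [esymVal, esymVal, map_sum]
  refine Finset.sum_congr rfl fun A _ => ?_
  rw [map_prod]
  refine Finset.prod_congr rfl fun j _ => ?_
  rw [hsubst]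
  congr 1
  simp


end
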